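/- Let V = F_q^n be a vector space over a finite field, T : V → V a linear map, and for each subspace W let W ∩ T⁻¹W denote {w ∈ W : T w ∈ W}. For integers n ≥ a > b ≥ 0, let N(a,b) be the number of a-dimensional subspaces W with dim(W ∩ T⁻¹W) = b, and let X_a be the number of a-dimensional T-invariant subspaces. Then N(a,b) = X_b · (n-b choose a-b)_q − X_a · (a choose b)_q + ∑_{j=0}^{b-1} N(b,j) · ((n-2b+j) choose (a-2b+j))_q − ∑_{k=b+1}^{a-1} N(a,k) · (k choose b)_q, where (· choose ·)_q denotes the Gaussian binomial coefficient counting subspaces over F_q. -/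

import Mathlib

def gaussBinom {R : Type*} [CommSemiring R] (q : R) : ℕ → ℕ → R
  | _, 0 => 1
  | 0, _ + 1 => 0
  | n + 1, k + 1 => gaussBinom q n k + q ^ (k + 1) * gaussBinom q n (k + 1)

/-- Gaussian binomial with integer arguments: zero when the lower index is
negative or exceeds the upper index. -/
def gaussBinomZ {R : Type*} [CommRing R] (q : R) (n k : ℤ) : R :=
  if 0 ≤ k ∧ k ≤ n then gaussBinom q n.toNat k.toNat else 0

/-- The number of `a`-dimensional subspaces `W` of `F^n` with
`dim (W ∩ T⁻¹W) = b`. -/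
noncomputable def Ncount (F : Type*) [Field F] (n : ℕ) (T : (Fin n → F) →ₗ[F] (Fin n → F))
    (a b : ℕ) : ℕ :=
  Nat.card {W : Submodule F (Fin n → F) //
    Module.finrank F W = a ∧ Module.finrank F ↥(W ⊓ W.comap T) = b}

/-- The number of `a`-dimensional `T`-invariant subspaces of `F^n`. -/
noncomputable def Xcount (F : Type*) [Field F] (n : ℕ) (T : (Fin n → F) →ₗ[F] (Fin n → F))
    (a : ℕ) : ℕ :=
  Nat.card {W : Submodule F (Fin n → F) //
    Module.finrank F W = a ∧ W.map T ≤ W}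

open Module


section GB
variable {R : Type*} [CommSemiring R] (q : R)

theorem gaussBinom_zero_right (n : ℕ) : gaussBinom q n 0 = 1 := by cases n <;> rfl

theorem gaussBinom_succ_succ (n k : ℕ) :
    gaussBinom q (n+1) (k+1) = gaussBinom q n k + q ^ (k + 1) * gaussBinom q n (k + 1) := rfl

theorem gaussBinom_eq_zero : ∀ {n k : ℕ}, n < k → gaussBinom q n k = 0
  | 0, _+1, _ => rfl
  | n+1, k+1, h => by
    rw [gaussBinom_succ_succ, gaussBinom_eq_zero (by omega), gaussBinom_eq_zero (by omega)]
    ring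

theorem gaussBinom_self : ∀ n : ℕ, gaussBinom q n n = 1
  | 0 => rfl
  | n+1 => by
    rw [gaussBinom_succ_succ, gaussBinom_self n, gaussBinom_eq_zero q (by omega)]; ring

theorem gaussBinom_natCast {S : Type*} [CommSemiring S] (q : ℕ) :
    ∀ n k : ℕ, ((gaussBinom q n k : ℕ) : S) = gaussBinom (q : S) n k
  | _, 0 => by rw [gaussBinom_zero_right, gaussBinom_zero_right]; norm_num
  | 0, k+1 => by norm_num [gaussBinom]
  | n+1, k+1 => by
    rw [gaussBinom_succ_succ, gaussBinom_succ_succ]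
    push_cast [gaussBinom_natCast q n k, gaussBinom_natCast q n (k+1)]
    ring

end GB

section Fin
variable (F : Type*) [Field F] [Fintype F] (V : Type*) [AddCommGroup V] [Module F V]
  [FiniteDimensional F V]

theorem finite_submodule : Finite (Submodule F V) := by
  haveI : Finite V := Module.finite_of_finite F
  exact Finite.of_injective (fun W => (W : Set V)) SetLike.coe_injective

theorem card_module_eq : Nat.card V = Fintype.card F ^ finrank F V := by
  haveI : Finite V := Module.finite_of_finite F
  haveI : Fintype V := Fintype.ofFinite V
  rw [Nat.card_eq_fintype_card, card_eq_pow_finrank (K := F)]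

end Fin

section FinrankLemmas
variable {F : Type*} [Field F] {V : Type*} [AddCommGroup V] [Module F V]
  [FiniteDimensional F V]

theorem finrank_map_mkQ_add (L W : Submodule F V) :
    finrank F (W.map L.mkQ) + finrank F ↥(W ⊓ L) = finrank F W := by
  have h := LinearMap.finrank_range_add_finrank_ker (L.mkQ.comp W.subtype)
  rw [LinearMap.range_comp, Submodule.range_subtype] at h
  rw [LinearMap.ker_comp, Submodule.ker_mkQ] at h
  have heq : Submodule.comap W.subtype L = Submodule.comap W.subtype (W ⊓ L) := by
    ext x; simp [x.2]
  rw [heq, (Submodule.comapSubtypeEquivOfLe (inf_le_left : W ⊓ L ≤ W)).finrank_eq] at h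
  exact h

theorem finrank_map_mkQ_add_of_le {L W : Submodule F V} (h : L ≤ W) :
    finrank F (W.map L.mkQ) + finrank F L = finrank F W := by
  have h2 := finrank_map_mkQ_add L W
  rwa [inf_eq_right.mpr h] at h2

end FinrankLemmas


section Fiber
variable {F : Type*} [Field F] {V : Type*} [AddCommGroup V] [Module F V]
  [FiniteDimensional F V] (L : Submodule F V) (U : Submodule F (V ⧸ L))

private noncomputable def secOf (W : Submodule F V) (hmap : W.map L.mkQ = U)
    (hdisj : W ⊓ L = ⊥) : {s : ↥U →ₗ[F] V // L.mkQ ∘ₗ s = U.subtype} := by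
  have hmem : ∀ w : W, L.mkQ w ∈ U := fun w => hmap ▸ Submodule.mem_map_of_mem w.2
  set g : ↥W →ₗ[F] ↥U := (L.mkQ.comp W.subtype).codRestrict U hmem with hg
  have hgval : ∀ w : W, (g w : V ⧸ L) = L.mkQ w := fun w => rfl
  have hinj : Function.Injective g := by
    rw [← LinearMap.ker_eq_bot, LinearMap.ker_eq_bot']
    intro w hw
    have h1 : (w : V) ∈ L := by
      have := congrArg (Subtype.val) hw
      rw [hgval] at this
      simpa [Submodule.Quotient.mk_eq_zero] using this
    have : (w : V) ∈ W ⊓ L := ⟨w.2, h1⟩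
    rw [hdisj] at this
    exact Subtype.ext (by simpa using this)
  have hsurj : Function.Surjective g := by
    intro u
    have : (u : V ⧸ L) ∈ W.map L.mkQ := hmap.symm ▸ u.2
    obtain ⟨w, hw, hwu⟩ := this
    exact ⟨⟨w, hw⟩, Subtype.ext (by simpa [hgval] using hwu)⟩
  set e := LinearEquiv.ofBijective g ⟨hinj, hsurj⟩ with he
  refine ⟨W.subtype ∘ₗ (e.symm : ↥U →ₗ[F] ↥W), ?_⟩
  ext u
  have : g (e.symm u) = u := e.apply_symm_apply u
  have := congrArg Subtype.val this
  rw [hgval] at this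
  simpa using this


private noncomputable def rangeOf (s : {s : ↥U →ₗ[F] V // L.mkQ ∘ₗ s = U.subtype}) :
    {W : Submodule F V // W.map L.mkQ = U ∧ W ⊓ L = ⊥} := by
  refine ⟨LinearMap.range s.1, ?_, ?_⟩
  · rw [← LinearMap.range_comp, s.2, Submodule.range_subtype]
  · rw [eq_bot_iff]
    rintro x ⟨⟨u, rfl⟩, hxL⟩
    have h1 : L.mkQ (s.1 u) = (u : V ⧸ L) := LinearMap.congr_fun s.2 u
    have h2 : L.mkQ (s.1 u) = 0 := by simpa [Submodule.Quotient.mk_eq_zero] using hxL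
    have hu : u = 0 := Subtype.ext (by rw [← h1, h2]; simp)
    simp [hu]

omit [FiniteDimensional F V] in
private theorem rangeOf_val (s : {s : ↥U →ₗ[F] V // L.mkQ ∘ₗ s = U.subtype}) :
    (rangeOf L U s : Submodule F V) = LinearMap.range s.1 := rfl

noncomputable def fiberEquivSect :
    {W : Submodule F V // W.map L.mkQ = U ∧ W ⊓ L = ⊥} ≃
      {s : ↥U →ₗ[F] V // L.mkQ ∘ₗ s = U.subtype} := by
  refine (Equiv.ofBijective (rangeOf L U) ⟨?_, ?_⟩).symm
  · rintro ⟨s, hs⟩ ⟨s', hs'⟩ h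
    have hr : LinearMap.range s = LinearMap.range s' := by
      have := congrArg Subtype.val h
      rwa [rangeOf_val, rangeOf_val] at this
    apply Subtype.ext
    apply LinearMap.ext
    intro u
    have hbot : LinearMap.range s ⊓ L = ⊥ := (rangeOf L U ⟨s, hs⟩).2.2
    have hd : s u - s' u ∈ LinearMap.range s ⊓ L := by
      constructor
      · exact sub_mem (LinearMap.mem_range_self s u)
          (hr ▸ LinearMap.mem_range_self s' u)
      · have h1 : L.mkQ (s u) = (u : V ⧸ L) := LinearMap.congr_fun hs u
        have h2 : L.mkQ (s' u) = (u : V ⧸ L) := LinearMap.congr_fun hs' u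
        have hz : L.mkQ (s u - s' u) = 0 := by rw [map_sub, h1, h2, sub_self]
        exact (Submodule.Quotient.mk_eq_zero L).mp (by rwa [Submodule.mkQ_apply] at hz)
    rw [hbot] at hd
    exact sub_eq_zero.mp (by simpa using hd)
  · rintro ⟨W, hmap, hdisj⟩
    refine ⟨secOf L U W hmap hdisj, ?_⟩
    apply Subtype.ext
    rw [rangeOf_val]
    show LinearMap.range (secOf L U W hmap hdisj).1 = W
    rw [secOf]
    simp only [LinearMap.range_comp, LinearEquiv.range, Submodule.map_top,
      Submodule.range_subtype]
end Fiber


section FiberCard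
variable {F : Type*} [Field F] [Fintype F] {V : Type*} [AddCommGroup V] [Module F V]
  [FiniteDimensional F V] (L : Submodule F V) (U : Submodule F (V ⧸ L))

theorem card_sect :
    Nat.card {s : ↥U →ₗ[F] V // L.mkQ ∘ₗ s = U.subtype}
      = Fintype.card F ^ (finrank F U * finrank F L) := by
  obtain ⟨σ, hσ⟩ := L.mkQ.exists_rightInverse_of_surjective L.range_mkQ
  set s₀ : ↥U →ₗ[F] V := σ ∘ₗ U.subtype with hs₀
  have hsec : L.mkQ ∘ₗ s₀ = U.subtype := by
    rw [hs₀, ← LinearMap.comp_assoc, hσ, LinearMap.id_comp]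
  have hmem : ∀ (s : ↥U →ₗ[F] V), L.mkQ ∘ₗ s = U.subtype → ∀ u, s u - s₀ u ∈ L := by
    intro s hs u
    have h1 : L.mkQ (s u) = (u : V ⧸ L) := LinearMap.congr_fun hs u
    have h2 : L.mkQ (s₀ u) = (u : V ⧸ L) := LinearMap.congr_fun hsec u
    have hz : L.mkQ (s u - s₀ u) = 0 := by rw [map_sub, h1, h2, sub_self]
    exact (Submodule.Quotient.mk_eq_zero L).mp (by rwa [Submodule.mkQ_apply] at hz)
  have e : {s : ↥U →ₗ[F] V // L.mkQ ∘ₗ s = U.subtype} ≃ (↥U →ₗ[F] ↥L) :=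
    { toFun := fun s => LinearMap.codRestrict L (s.1 - s₀) (hmem s.1 s.2)
      invFun := fun g => ⟨s₀ + L.subtype ∘ₗ g, by
        ext u
        have h2 : L.mkQ (s₀ u) = (u : V ⧸ L) := LinearMap.congr_fun hsec u
        have h3 : L.mkQ ((g u : V)) = 0 :=
          (Submodule.Quotient.mk_eq_zero L).mpr (g u).2
        have h4 : L.mkQ (s₀ u + (g u : V)) = (u : V ⧸ L) := by
          rw [map_add, h2, h3, add_zero]
        simpa using h4⟩
      left_inv := fun s => by
        apply Subtype.ext; ext u; simp
      right_inv := fun g => by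
        ext u; simp }
  rw [Nat.card_congr e, card_module_eq F, finrank_linearMap]
end FiberCard


section Helpers

theorem nat_card_sigma {ι : Type*} [Fintype ι] (f : ι → Type*) [∀ i, Finite (f i)] :
    Nat.card (Σ i, f i) = ∑ i, Nat.card (f i) := by
  haveI := fun i => Fintype.ofFinite (f i)
  simp [Nat.card_eq_fintype_card]

theorem nat_card_subtype_split {α : Type*} [Finite α] (p q : α → Prop) :
    Nat.card {x // p x} =
      Nat.card {x // p x ∧ q x} + Nat.card {x // p x ∧ ¬ q x} := by
  classical
  rw [← Nat.card_sum]
  apply Nat.card_congr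
  calc {x // p x} ≃ {y : {x // p x} // q y.1} ⊕ {y : {x // p x} // ¬ q y.1} :=
        (Equiv.sumCompl _).symm
    _ ≃ {x // p x ∧ q x} ⊕ {x // p x ∧ ¬ q x} :=
        Equiv.sumCongr (Equiv.subtypeSubtypeEquivSubtypeInter p q)
          (Equiv.subtypeSubtypeEquivSubtypeInter p (fun x => ¬ q x))

end Helpers

section Main
variable (F : Type*) [Field F] [Fintype F]

theorem card_submodule_rank :
    ∀ (n : ℕ) (V : Type*) [AddCommGroup V] [Module F V] [FiniteDimensional F V],
      finrank F V = n → ∀ k : ℕ,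
      Nat.card {W : Submodule F V // finrank F ↥W = k}
        = gaussBinom (Fintype.card F) n k := by
  intro n
  induction n with
  | zero =>
    intro V _ _ _ hV k
    haveI : Subsingleton V := finrank_zero_iff.mp hV
    haveI : Subsingleton (Submodule F V) := inferInstance
    cases k with
    | zero =>
      rw [gaussBinom_zero_right, Nat.card_eq_one_iff_unique]
      exact ⟨inferInstance, ⟨⊥, finrank_bot F V⟩⟩
    | succ k =>
      rw [gaussBinom_eq_zero _ (by omega)]
      haveI : IsEmpty {W : Submodule F V // finrank F ↥W = k + 1} :=
        ⟨fun W => by have h1 := Submodule.finrank_le W.1; have h2 := W.2; omega⟩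
      exact Nat.card_of_isEmpty
  | succ n ih =>
    intro V _ _ _ hV k
    haveI : Finite (Submodule F V) := finite_submodule F V
    cases k with
    | zero =>
      rw [gaussBinom_zero_right, Nat.card_eq_one_iff_unique]
      constructor
      · constructor
        rintro ⟨W, hW⟩ ⟨W', hW'⟩
        have : W = ⊥ := Submodule.finrank_eq_zero.mp hW
        have h2 : W' = ⊥ := Submodule.finrank_eq_zero.mp hW'
        subst this; subst h2; rfl
      · exact ⟨⟨⊥, finrank_bot F V⟩⟩
    | succ k =>
      haveI : Nontrivial V := by
        apply Module.nontrivial_of_finrank_pos (R := F) (M := V); omega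
      obtain ⟨v, hv⟩ := exists_ne (0 : V)
      set L : Submodule F V := Submodule.span F {v} with hLdef
      have hL1 : finrank F ↥L = 1 := finrank_span_singleton hv
      have hQ : finrank F (V ⧸ L) = n := by
        have := Submodule.finrank_quotient_add_finrank L
        omega
      -- ¬ L ≤ W ↔ W ⊓ L = ⊥
      have hiff : ∀ W : Submodule F V, ¬ L ≤ W ↔ W ⊓ L = ⊥ := by
        intro W
        rw [← disjoint_iff, hLdef, Submodule.disjoint_span_singleton,
          Submodule.span_le, Set.singleton_subset_iff]
        constructor
        · intro h hmem; exact absurd hmem (by simpa using h)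
        · intro h hmem; exact absurd (h hmem) hv
      rw [nat_card_subtype_split (fun W : Submodule F V => finrank F ↥W = k + 1)
        (fun W => L ≤ W)]
      -- Part 1 : L ≤ W
      have hpart1 : Nat.card {W : Submodule F V // finrank F ↥W = k + 1 ∧ L ≤ W}
          = gaussBinom (Fintype.card F) n k := by
        have hcr : ∀ U : Submodule F (V ⧸ L),
            finrank F ↥(U.comap L.mkQ) = finrank F ↥U + 1 := by
          intro U
          have hle : L ≤ U.comap L.mkQ := by
            intro x hx
            simp only [Submodule.mem_comap, Submodule.mkQ_apply]
            rw [Submodule.Quotient.mk_eq_zero L |>.mpr hx]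
            exact zero_mem U
          have h1 := finrank_map_mkQ_add_of_le hle
          rw [Submodule.map_comap_eq_of_surjective (Submodule.mkQ_surjective L)] at h1
          omega
        have e : {W : Submodule F V // finrank F ↥W = k + 1 ∧ L ≤ W}
            ≃ {U : Submodule F (V ⧸ L) // finrank F ↥U = k} := by
          calc {W : Submodule F V // finrank F ↥W = k + 1 ∧ L ≤ W}
              ≃ {W : Submodule F V // L ≤ W ∧ finrank F ↥W = k + 1} :=
                Equiv.subtypeEquivRight (fun W => and_comm)
            _ ≃ {y : {W : Submodule F V // L ≤ W} // finrank F ↥(y.1) = k + 1} :=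
                (Equiv.subtypeSubtypeEquivSubtypeInter _ _).symm
            _ ≃ {U : Submodule F (V ⧸ L) // finrank F ↥((L.comapMkQRelIso U).1) = k + 1} :=
                (Equiv.subtypeEquiv (Submodule.comapMkQRelIso L).toEquiv
                  (fun U => Iff.rfl)).symm
            _ ≃ {U : Submodule F (V ⧸ L) // finrank F ↥U = k} :=
                Equiv.subtypeEquivRight (fun U => by
                  have := hcr U
                  show finrank F ↥(U.comap L.mkQ) = k + 1 ↔ _
                  omega)
        rw [Nat.card_congr e, ih (V ⧸ L) hQ k]
      -- Part 2 : ¬ L ≤ W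
      have hpart2 : Nat.card {W : Submodule F V // finrank F ↥W = k + 1 ∧ ¬ L ≤ W}
          = Fintype.card F ^ (k + 1) * gaussBinom (Fintype.card F) n (k + 1) := by
        haveI : Finite (Submodule F (V ⧸ L)) := finite_submodule F (V ⧸ L)
        haveI : Fintype {U : Submodule F (V ⧸ L) // finrank F ↥U = k + 1} :=
          Fintype.ofFinite _
        have e0 : {W : Submodule F V // finrank F ↥W = k + 1 ∧ ¬ L ≤ W}
            ≃ {W : Submodule F V // finrank F ↥W = k + 1 ∧ W ⊓ L = ⊥} :=
          Equiv.subtypeEquivRight (fun W => by rw [hiff W])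
        -- the fibering map
        set Φ : {W : Submodule F V // finrank F ↥W = k + 1 ∧ W ⊓ L = ⊥}
            → {U : Submodule F (V ⧸ L) // finrank F ↥U = k + 1} :=
          fun W => ⟨W.1.map L.mkQ, by
            have h1 := finrank_map_mkQ_add L W.1
            rw [W.2.2, finrank_bot] at h1
            have h2 := W.2.1
            omega⟩ with hΦ
        have efib : ∀ U : {U : Submodule F (V ⧸ L) // finrank F ↥U = k + 1},
            Nat.card {W // Φ W = U} = Fintype.card F ^ (k + 1) := by
          intro U
          have e1 : {W // Φ W = U}
              ≃ {W : Submodule F V // W.map L.mkQ = U.1 ∧ W ⊓ L = ⊥} := by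
            calc {W // Φ W = U}
                ≃ {W : {W : Submodule F V // finrank F ↥W = k + 1 ∧ W ⊓ L = ⊥} //
                    W.1.map L.mkQ = U.1} :=
                  Equiv.subtypeEquivRight (fun W => by
                    rw [hΦ]; exact Subtype.ext_iff)
              _ ≃ {W : Submodule F V //
                    (finrank F ↥W = k + 1 ∧ W ⊓ L = ⊥) ∧ W.map L.mkQ = U.1} :=
                  Equiv.subtypeSubtypeEquivSubtypeInter
                    (fun W : Submodule F V => finrank F ↥W = k + 1 ∧ W ⊓ L = ⊥)
                    (fun W => W.map L.mkQ = U.1)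
              _ ≃ {W : Submodule F V // W.map L.mkQ = U.1 ∧ W ⊓ L = ⊥} :=
                  Equiv.subtypeEquivRight (fun W => by
                    constructor
                    · rintro ⟨⟨h1, h2⟩, h3⟩; exact ⟨h3, h2⟩
                    · rintro ⟨h3, h2⟩
                      refine ⟨⟨?_, h2⟩, h3⟩
                      have h1 := finrank_map_mkQ_add L W
                      rw [h2, finrank_bot, h3] at h1
                      have h4 := U.2
                      omega)
          rw [Nat.card_congr e1, Nat.card_congr (fiberEquivSect L U.1), card_sect,
            hL1, U.2, mul_one]
        rw [Nat.card_congr e0, Nat.card_congr (Equiv.sigmaFiberEquiv Φ).symm,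
          nat_card_sigma]
        rw [Finset.sum_congr rfl (fun U _ => efib U), Finset.sum_const, Finset.card_univ,
          ← Nat.card_eq_fintype_card, ih (V ⧸ L) hQ (k + 1), smul_eq_mul, mul_comm]
      rw [hpart1, hpart2, gaussBinom_succ_succ]
end Main


section AB
variable {F : Type*} [Field F] [Fintype F] {V : Type*} [AddCommGroup V] [Module F V]
  [FiniteDimensional F V]

omit [Fintype F] in
theorem finrank_comap_mkQ (Z : Submodule F V) (U : Submodule F (V ⧸ Z)) :
    finrank F ↥(U.comap Z.mkQ) = finrank F ↥U + finrank F ↥Z := by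
  have hle : Z ≤ U.comap Z.mkQ := by
    intro x hx
    simp only [Submodule.mem_comap, Submodule.mkQ_apply]
    rw [Submodule.Quotient.mk_eq_zero Z |>.mpr hx]
    exact zero_mem U
  have h1 := finrank_map_mkQ_add_of_le hle
  rw [Submodule.map_comap_eq_of_surjective (Submodule.mkQ_surjective Z)] at h1
  omega

theorem card_submodule_le_z (Z : Submodule F V) (b : ℕ) :
    Nat.card {U : Submodule F V // finrank F ↥U = b ∧ U ≤ Z}
      = gaussBinom (Fintype.card F) (finrank F ↥Z) b := by
  have e : {U : Submodule F V // finrank F ↥U = b ∧ U ≤ Z}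
      ≃ {p : Submodule F ↥Z // finrank F ↥p = b} := by
    calc {U : Submodule F V // finrank F ↥U = b ∧ U ≤ Z}
        ≃ {U : Submodule F V // U ≤ Z ∧ finrank F ↥U = b} :=
          Equiv.subtypeEquivRight (fun U => and_comm)
      _ ≃ {y : {U : Submodule F V // U ≤ Z} // finrank F ↥(y.1) = b} :=
          (Equiv.subtypeSubtypeEquivSubtypeInter (fun U : Submodule F V => U ≤ Z)
            (fun U => finrank F ↥U = b)).symm
      _ ≃ {p : Submodule F ↥Z // finrank F ↥((Submodule.MapSubtype.orderIso Z p).1) = b} :=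
          (Equiv.subtypeEquiv (Submodule.MapSubtype.orderIso Z).toEquiv
            (fun U => Iff.rfl)).symm
      _ ≃ {p : Submodule F ↥Z // finrank F ↥p = b} :=
          Equiv.subtypeEquivRight (fun p => by
            show finrank F ↥(p.map Z.subtype) = b ↔ _
            rw [(Submodule.equivMapOfInjective Z.subtype Z.injective_subtype p).finrank_eq])
  rw [Nat.card_congr e, card_submodule_rank F (finrank F ↥Z) ↥Z rfl b]

theorem card_submodule_ge_z (Z : Submodule F V) (a : ℕ) :
    Nat.card {W : Submodule F V // finrank F ↥W = a ∧ Z ≤ W}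
      = if finrank F ↥Z ≤ a then
          gaussBinom (Fintype.card F) (finrank F V - finrank F ↥Z) (a - finrank F ↥Z)
        else 0 := by
  split_ifs with h
  · have e : {W : Submodule F V // finrank F ↥W = a ∧ Z ≤ W}
        ≃ {U : Submodule F (V ⧸ Z) // finrank F ↥U = a - finrank F ↥Z} := by
      calc {W : Submodule F V // finrank F ↥W = a ∧ Z ≤ W}
          ≃ {W : Submodule F V // Z ≤ W ∧ finrank F ↥W = a} :=
            Equiv.subtypeEquivRight (fun W => and_comm)
        _ ≃ {y : {W : Submodule F V // Z ≤ W} // finrank F ↥(y.1) = a} :=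
            (Equiv.subtypeSubtypeEquivSubtypeInter (fun W : Submodule F V => Z ≤ W)
              (fun W => finrank F ↥W = a)).symm
        _ ≃ {U : Submodule F (V ⧸ Z) // finrank F ↥((Z.comapMkQRelIso U).1) = a} :=
            (Equiv.subtypeEquiv (Submodule.comapMkQRelIso Z).toEquiv
              (fun U => Iff.rfl)).symm
        _ ≃ {U : Submodule F (V ⧸ Z) // finrank F ↥U = a - finrank F ↥Z} :=
            Equiv.subtypeEquivRight (fun U => by
              show finrank F ↥(U.comap Z.mkQ) = a ↔ _
              rw [finrank_comap_mkQ]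
              omega)
    have hq : finrank F (V ⧸ Z) = finrank F V - finrank F ↥Z := by
      have := Submodule.finrank_quotient_add_finrank Z
      omega
    rw [Nat.card_congr e, card_submodule_rank F _ (V ⧸ Z) hq _]
  · haveI : IsEmpty {W : Submodule F V // finrank F ↥W = a ∧ Z ≤ W} := by
      refine ⟨fun W => ?_⟩
      have h1 : finrank F ↥Z ≤ finrank F ↥(W.1) := Submodule.finrank_mono W.2.2
      have h2 := W.2.1
      omega
    exact Nat.card_of_isEmpty

theorem finrank_sup_map_add (T : V →ₗ[F] V) (U : Submodule F V) :
    finrank F ↥(U ⊔ U.map T) + finrank F ↥(U ⊓ U.comap T) = 2 * finrank F ↥U := by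
  have hrn := LinearMap.finrank_range_add_finrank_ker (U.mkQ ∘ₗ T ∘ₗ U.subtype)
  -- kernel
  have hker : LinearMap.ker (U.mkQ ∘ₗ T ∘ₗ U.subtype)
      = Submodule.comap U.subtype (U ⊓ U.comap T) := by
    rw [LinearMap.ker_comp, Submodule.ker_mkQ]
    ext x
    simp [Submodule.mem_comap, x.2]
  have hkrank : finrank F ↥(LinearMap.ker (U.mkQ ∘ₗ T ∘ₗ U.subtype))
      = finrank F ↥(U ⊓ U.comap T) := by
    rw [hker, (Submodule.comapSubtypeEquivOfLe
      (inf_le_left : U ⊓ U.comap T ≤ U)).finrank_eq]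
  -- range
  have hrange : LinearMap.range (U.mkQ ∘ₗ T ∘ₗ U.subtype)
      = (U ⊔ U.map T).map U.mkQ := by
    rw [LinearMap.range_comp, LinearMap.range_comp, Submodule.range_subtype,
      Submodule.map_sup]
    have hmapbot : U.map U.mkQ = ⊥ := by
      rw [eq_bot_iff]
      rintro x ⟨y, hy, rfl⟩
      simpa [Submodule.mkQ_apply, Submodule.Quotient.mk_eq_zero] using hy
    rw [hmapbot, bot_sup_eq]
  have hsup : finrank F ↥((U ⊔ U.map T).map U.mkQ) + finrank F ↥U
      = finrank F ↥(U ⊔ U.map T) :=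
    finrank_map_mkQ_add_of_le le_sup_left
  rw [hkrank, hrange] at hrn
  omega

end AB


theorem gaussBinomZ_coe_nat {R : Type*} [CommRing R] (q : R) (m k : ℕ) :
    gaussBinomZ q (m : ℤ) (k : ℤ) = gaussBinom q m k := by
  rw [gaussBinomZ]
  split_ifs with h
  · simp
  · rw [gaussBinom_eq_zero]
    push_cast at h
    omega

theorem sum_fiber_count {ι : Type*} [Fintype ι] (d : ι → ℕ) (m : ℕ)
    (hd : ∀ i, d i < m) (g : ℕ → ℕ) :
    ∑ i, g (d i) = ∑ k ∈ Finset.range m, Nat.card {i // d i = k} * g k := by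
  classical
  rw [← Finset.sum_fiberwise_of_maps_to (fun i _ => Finset.mem_range.mpr (hd i))
    (fun i => g (d i))]
  apply Finset.sum_congr rfl
  intro k _
  rw [Finset.sum_congr rfl (fun i hi => by rw [(Finset.mem_filter.mp hi).2]),
    Finset.sum_const, smul_eq_mul]
  congr 1
  rw [Nat.card_eq_fintype_card, Fintype.card_subtype]

section DC
variable {F : Type*} [Field F] [Fintype F] {V : Type*} [AddCommGroup V] [Module F V]
  [FiniteDimensional F V] (T : V →ₗ[F] V) (a b : ℕ)

private def PairT : Type _ :=
  {p : Submodule F V × Submodule F V //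
    finrank F ↥p.2 = a ∧ finrank F ↥p.1 = b ∧ p.1 ≤ p.2 ⊓ p.2.comap T}

private def way1 : PairT T a b ≃
    Σ W : {W : Submodule F V // finrank F ↥W = a},
      {U : Submodule F V // finrank F ↥U = b ∧ U ≤ W.1 ⊓ W.1.comap T} where
  toFun p := ⟨⟨p.1.2, p.2.1⟩, ⟨p.1.1, p.2.2.1, p.2.2.2⟩⟩
  invFun x := ⟨(x.2.1, x.1.1), x.1.2, x.2.2.1, x.2.2.2⟩
  left_inv p := rfl
  right_inv x := rfl

private theorem cond_iff (U W : Submodule F V) :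
    U ≤ W ⊓ W.comap T ↔ U ⊔ U.map T ≤ W := by
  rw [le_inf_iff, sup_le_iff, Submodule.map_le_iff_le_comap]

private def way2 : PairT T a b ≃
    Σ U : {U : Submodule F V // finrank F ↥U = b},
      {W : Submodule F V // finrank F ↥W = a ∧ U.1 ⊔ U.1.map T ≤ W} where
  toFun p := ⟨⟨p.1.1, p.2.2.1⟩, ⟨p.1.2, p.2.1, (cond_iff T _ _).mp p.2.2.2⟩⟩
  invFun x := ⟨(x.1.1, x.2.1), x.2.2.1, x.1.2, (cond_iff T _ _).mpr x.2.2.2⟩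
  left_inv p := rfl
  right_inv x := rfl

theorem double_count (han : a ≤ finrank F V) (hba : b ≤ a) :
    ∑ k ∈ Finset.range (a + 1),
        Nat.card {W : Submodule F V //
          finrank F ↥W = a ∧ finrank F ↥(W ⊓ W.comap T) = k}
          * gaussBinom (Fintype.card F) k b
      = ∑ j ∈ Finset.range (b + 1),
          Nat.card {U : Submodule F V //
            finrank F ↥U = b ∧ finrank F ↥(U ⊓ U.comap T) = j}
            * (if 2 * b - j ≤ a then
                gaussBinom (Fintype.card F) (finrank F V - (2 * b - j)) (a - (2 * b - j))
              else 0) := by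
  classical
  haveI : Finite (Submodule F V) := finite_submodule F V
  haveI : Fintype {W : Submodule F V // finrank F ↥W = a} := Fintype.ofFinite _
  haveI : Fintype {U : Submodule F V // finrank F ↥U = b} := Fintype.ofFinite _
  have key1 : Nat.card (PairT T a b) = ∑ k ∈ Finset.range (a + 1),
      Nat.card {W : Submodule F V //
        finrank F ↥W = a ∧ finrank F ↥(W ⊓ W.comap T) = k}
        * gaussBinom (Fintype.card F) k b := by
    rw [Nat.card_congr (way1 T a b), nat_card_sigma]
    have step : ∀ W : {W : Submodule F V // finrank F ↥W = a},
        Nat.card {U : Submodule F V // finrank F ↥U = b ∧ U ≤ W.1 ⊓ W.1.comap T}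
          = gaussBinom (Fintype.card F) (finrank F ↥(W.1 ⊓ W.1.comap T)) b :=
      fun W => card_submodule_le_z _ b
    rw [Finset.sum_congr rfl (fun W _ => step W)]
    have hdlt : ∀ W : {W : Submodule F V // finrank F ↥W = a},
        finrank F ↥(W.1 ⊓ W.1.comap T) < a + 1 := by
      intro W
      have := Submodule.finrank_mono (inf_le_left : W.1 ⊓ W.1.comap T ≤ W.1)
      have := W.2
      omega
    rw [sum_fiber_count _ (a + 1) hdlt (fun k => gaussBinom (Fintype.card F) k b)]
    apply Finset.sum_congr rfl
    intro k _
    congr 1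
    apply Nat.card_congr
    exact Equiv.subtypeSubtypeEquivSubtypeInter
      (fun W : Submodule F V => finrank F ↥W = a)
      (fun W => finrank F ↥(W ⊓ W.comap T) = k)
  have key2 : Nat.card (PairT T a b) = ∑ j ∈ Finset.range (b + 1),
      Nat.card {U : Submodule F V //
        finrank F ↥U = b ∧ finrank F ↥(U ⊓ U.comap T) = j}
        * (if 2 * b - j ≤ a then
            gaussBinom (Fintype.card F) (finrank F V - (2 * b - j)) (a - (2 * b - j))
          else 0) := by
    rw [Nat.card_congr (way2 T a b), nat_card_sigma]
    have step : ∀ U : {U : Submodule F V // finrank F ↥U = b},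
        Nat.card {W : Submodule F V // finrank F ↥W = a ∧ U.1 ⊔ U.1.map T ≤ W}
          = (if 2 * b - finrank F ↥(U.1 ⊓ U.1.comap T) ≤ a then
              gaussBinom (Fintype.card F)
                (finrank F V - (2 * b - finrank F ↥(U.1 ⊓ U.1.comap T)))
                (a - (2 * b - finrank F ↥(U.1 ⊓ U.1.comap T)))
            else 0) := by
      intro U
      have hdim := finrank_sup_map_add T U.1
      rw [U.2] at hdim
      have hj : finrank F ↥(U.1 ⊓ U.1.comap T) ≤ b := by
        have h2 := Submodule.finrank_mono (inf_le_left : U.1 ⊓ U.1.comap T ≤ U.1)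
        rw [U.2] at h2; exact h2
      have hZ : finrank F ↥(U.1 ⊔ U.1.map T) = 2 * b - finrank F ↥(U.1 ⊓ U.1.comap T) := by
        omega
      rw [card_submodule_ge_z, hZ]
    rw [Finset.sum_congr rfl (fun U _ => step U)]
    have hdlt : ∀ U : {U : Submodule F V // finrank F ↥U = b},
        finrank F ↥(U.1 ⊓ U.1.comap T) < b + 1 := by
      intro U
      have := Submodule.finrank_mono (inf_le_left : U.1 ⊓ U.1.comap T ≤ U.1)
      have := U.2
      omega
    rw [sum_fiber_count _ (b + 1) hdlt (fun j => if 2 * b - j ≤ a then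
        gaussBinom (Fintype.card F) (finrank F V - (2 * b - j)) (a - (2 * b - j))
      else 0)]
    apply Finset.sum_congr rfl
    intro j _
    congr 1
    apply Nat.card_congr
    exact Equiv.subtypeSubtypeEquivSubtypeInter
      (fun U : Submodule F V => finrank F ↥U = b)
      (fun U => finrank F ↥(U ⊓ U.comap T) = j)
  rw [← key1, key2]
end DC

theorem Ncount_diag (F : Type*) [Field F] [Fintype F] (n : ℕ)
    (T : (Fin n → F) →ₗ[F] (Fin n → F)) (a : ℕ) :
    Ncount F n T a a = Xcount F n T a := by
  apply Nat.card_congr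
  apply Equiv.subtypeEquivRight
  intro W
  constructor
  · rintro ⟨h1, h2⟩
    refine ⟨h1, ?_⟩
    have hle : W ⊓ W.comap T ≤ W := inf_le_left
    have heq : W ⊓ W.comap T = W := Submodule.eq_of_le_of_finrank_le hle (by omega)
    rw [Submodule.map_le_iff_le_comap]
    intro x hx
    have hm : x ∈ W ⊓ W.comap T := heq.symm ▸ hx
    exact hm.2
  · rintro ⟨h1, h2⟩
    refine ⟨h1, ?_⟩
    have heq : W ⊓ W.comap T = W :=
      inf_eq_left.mpr (Submodule.map_le_iff_le_comap.mp h2)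
    rw [heq, h1]


/-- The recurrence of Proposition 3.3: for `n ≥ a > b ≥ 0`,
`N(a,b) = X_b (n-b choose a-b)_q - X_a (a choose b)_q
  + ∑_{j=0}^{b-1} N(b,j) (n-2b+j choose a-2b+j)_q - ∑_{k=b+1}^{a-1} N(a,k) (k choose b)_q`. -/
theorem Ncount_recurrence (F : Type*) [Field F] [Fintype F] (n : ℕ)
    (T : (Fin n → F) →ₗ[F] (Fin n → F)) (a b : ℕ) (hba : b < a) (han : a ≤ n) :
    (Ncount F n T a b : ℤ) =
      (Xcount F n T b : ℤ) * gaussBinomZ (Fintype.card F : ℤ) ((n : ℤ) - b) ((a : ℤ) - b)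
      - (Xcount F n T a : ℤ) * gaussBinomZ (Fintype.card F : ℤ) (a : ℤ) (b : ℤ)
      + ∑ j ∈ Finset.range b,
          (Ncount F n T b j : ℤ) *
            gaussBinomZ (Fintype.card F : ℤ) ((n : ℤ) - 2 * b + j) ((a : ℤ) - 2 * b + j)
      - ∑ k ∈ Finset.Ico (b + 1) a,
          (Ncount F n T a k : ℤ) * gaussBinomZ (Fintype.card F : ℤ) (k : ℤ) (b : ℤ) := by
  classical
  have hfr : finrank F (Fin n → F) = n := Module.finrank_fin_fun F
  have hdc := double_count T a b (by rw [hfr]; exact han) (le_of_lt hba)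
  rw [hfr] at hdc
  have hNa : ∀ k, Nat.card {W : Submodule F (Fin n → F) //
      finrank F ↥W = a ∧ finrank F ↥(W ⊓ W.comap T) = k} = Ncount F n T a k :=
    fun _ => rfl
  have hNb : ∀ j, Nat.card {W : Submodule F (Fin n → F) //
      finrank F ↥W = b ∧ finrank F ↥(W ⊓ W.comap T) = j} = Ncount F n T b j :=
    fun _ => rfl
  simp only [hNa, hNb] at hdc
  rw [Finset.sum_range_succ, Finset.range_eq_Ico,
    ← Finset.sum_Ico_consecutive _ (Nat.zero_le (b + 1)) hba,
    ← Finset.range_eq_Ico, Finset.sum_range_succ] at hdc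
  have hzero : ∑ k ∈ Finset.range b, Ncount F n T a k * gaussBinom (Fintype.card F) k b
      = 0 :=
    Finset.sum_eq_zero fun k hk => by
      rw [gaussBinom_eq_zero _ (Finset.mem_range.mp hk), mul_zero]
  rw [hzero, zero_add, gaussBinom_self, mul_one, Ncount_diag,
    Finset.sum_range_succ, Ncount_diag] at hdc
  have hEb : (if 2 * b - b ≤ a then
        gaussBinom (Fintype.card F) (n - (2 * b - b)) (a - (2 * b - b)) else 0)
      = gaussBinom (Fintype.card F) (n - b) (a - b) := by
    rw [if_pos (by omega)]
    congr 1 <;> omega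
  rw [hEb] at hdc
  have hZ := congrArg (fun x : ℕ => (x : ℤ)) hdc
  push_cast at hZ
  have hG1 : gaussBinomZ ((Fintype.card F : ℕ) : ℤ) ((n : ℤ) - b) ((a : ℤ) - b)
      = ((gaussBinom (Fintype.card F) (n - b) (a - b) : ℕ) : ℤ) := by
    have h1 : (n : ℤ) - b = ((n - b : ℕ) : ℤ) := by omega
    have h2 : (a : ℤ) - b = ((a - b : ℕ) : ℤ) := by omega
    rw [h1, h2, gaussBinomZ_coe_nat, gaussBinom_natCast]
  have hG2 : gaussBinomZ ((Fintype.card F : ℕ) : ℤ) (a : ℤ) (b : ℤ)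
      = ((gaussBinom (Fintype.card F) a b : ℕ) : ℤ) := by
    rw [gaussBinomZ_coe_nat, gaussBinom_natCast]
  have hG3 : ∀ k : ℕ, gaussBinomZ ((Fintype.card F : ℕ) : ℤ) (k : ℤ) (b : ℤ)
      = ((gaussBinom (Fintype.card F) k b : ℕ) : ℤ) := fun k => by
    rw [gaussBinomZ_coe_nat, gaussBinom_natCast]
  have hG4 : ∀ j, j < b →
      gaussBinomZ ((Fintype.card F : ℕ) : ℤ) ((n : ℤ) - 2 * b + j) ((a : ℤ) - 2 * b + j)
      = ((if 2 * b - j ≤ a then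
          gaussBinom (Fintype.card F) (n - (2 * b - j)) (a - (2 * b - j)) else 0 : ℕ) : ℤ) := by
    intro j hj
    by_cases hc : 2 * b - j ≤ a
    · have h1 : (n : ℤ) - 2 * b + j = ((n - (2 * b - j) : ℕ) : ℤ) := by omega
      have h2 : (a : ℤ) - 2 * b + j = ((a - (2 * b - j) : ℕ) : ℤ) := by omega
      rw [h1, h2, gaussBinomZ_coe_nat, if_pos hc, gaussBinom_natCast]
    · rw [if_neg hc, gaussBinomZ, if_neg (by omega)]
      norm_num
  rw [hG1, hG2]
  rw [show (∑ j ∈ Finset.range b, (Ncount F n T b j : ℤ) *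
      gaussBinomZ ((Fintype.card F : ℕ) : ℤ) ((n : ℤ) - 2 * b + j) ((a : ℤ) - 2 * b + j))
      = ∑ j ∈ Finset.range b, (Ncount F n T b j : ℤ) *
        ((if 2 * b - j ≤ a then
          gaussBinom (Fintype.card F) (n - (2 * b - j)) (a - (2 * b - j)) else 0 : ℕ) : ℤ)
    from Finset.sum_congr rfl (fun j hj => by rw [hG4 j (Finset.mem_range.mp hj)])]
  rw [show (∑ k ∈ Finset.Ico (b + 1) a, (Ncount F n T a k : ℤ) *
      gaussBinomZ ((Fintype.card F : ℕ) : ℤ) (k : ℤ) (b : ℤ))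
      = ∑ k ∈ Finset.Ico (b + 1) a, (Ncount F n T a k : ℤ) *
        ((gaussBinom (Fintype.card F) k b : ℕ) : ℤ)
    from Finset.sum_congr rfl (fun k hk => by rw [hG3 k])]
  simp only [apply_ite (fun x : ℕ => (x : ℤ)), Nat.cast_zero] at hZ ⊢
  linarith [hZ]
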